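/- (Multidimensional Ramsey) Let $n \ge 1$. There exists a function $R\colon \omega^n \times (\omega\setminus\{0\}) \times \omega \to \omega$ such that for all natural numbers $j_1,\dots,j_n, c > 0, r$ and all finite sets $S_1,\dots,S_n$ with $|S_i| \ge R(j_1,\dots,j_n,c,r)$ for each $i$, and every partition (covering) $[S_1]^{j_1}\times\cdots\times[S_n]^{j_n} = Y_1 \cup \cdots \cup Y_c$, there exist subsets $T_i \in [S_i]^r$ for each $i$ and some $d \le c$ with $[T_1]^{j_1}\times\cdots\times[T_n]^{j_n} \subseteq Y_d$. -/

import Mathlib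

open Finset

/-- Finite hypergraph Ramsey theorem over linear orders. -/
private lemma ramsey_lin (c : ℕ) (hc : 0 < c) : ∀ j r : ℕ,
    ∃ N : ℕ, ∀ (α : Type) [LinearOrder α] (S : Finset α) (f : Finset α → Fin c),
      N ≤ S.card → ∃ T, T ⊆ S ∧ T.card = r ∧
        ∃ d, ∀ x, x ⊆ T → x.card = j → f x = d := by
  intro j
  induction j with
  | zero =>
    intro r
    refine ⟨r, ?_⟩
    intro α _ S f hS
    obtain ⟨T, hT, hTc⟩ := Finset.exists_subset_card_eq (s := S) (n := r) hS
    refine ⟨T, hT, hTc, f ∅, fun x _ hx => by rw [Finset.card_eq_zero.mp hx]⟩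
  | succ j ih =>
    intro r
    -- inner lemma: pre-homogeneous sets
    have key : ∀ m : ℕ, ∃ N : ℕ,
        ∀ (α : Type) [LinearOrder α] (S : Finset α) (f : Finset α → Fin c),
        N ≤ S.card → ∃ (A : Finset α) (g : α → Fin c), A ⊆ S ∧ A.card = m ∧
          ∀ x (hx : x.Nonempty), x ⊆ A → x.card = j + 1 → f x = g (x.min' hx) := by
      intro m
      induction m with
      | zero =>
        refine ⟨0, fun α _ S f _ => ⟨∅, fun _ => ⟨0, hc⟩, empty_subset _, card_empty, ?_⟩⟩
        intro x hx hxA _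
        exact absurd (Finset.subset_empty.mp hxA) hx.ne_empty
      | succ m ihm =>
        obtain ⟨Nm, hNm⟩ := ihm
        obtain ⟨Nj, hNj⟩ := ih Nm
        refine ⟨Nj + 1, ?_⟩
        intro α _ S f hS
        have hSne : S.Nonempty := card_pos.mp (lt_of_lt_of_le (Nat.succ_pos _) hS)
        set a := S.min' hSne with ha
        have haS : a ∈ S := S.min'_mem hSne
        have hS' : Nj ≤ (S.erase a).card := by
          rw [card_erase_of_mem haS]; omega
        obtain ⟨B, hBS, hBcard, d, hd⟩ := hNj α (S.erase a) (fun x => f (insert a x)) hS'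
        obtain ⟨A', g', hA'B, hA'card, hg'⟩ := hNm α B f (le_of_eq hBcard.symm)
        have haA' : a ∉ A' := fun h => (Finset.notMem_erase a S) (hBS (hA'B h))
        refine ⟨insert a A', fun b => if b = a then d else g' b, ?_, ?_, ?_⟩
        · exact insert_subset haS ((hA'B.trans hBS).trans (erase_subset a S))
        · rw [card_insert_of_notMem haA', hA'card]
        · intro x hx hxA hxcard
          have hxS : x ⊆ S := hxA.trans
            (insert_subset haS ((hA'B.trans hBS).trans (erase_subset a S)))
          by_cases hax : a ∈ x
          · have hmin : x.min' hx = a := le_antisymm (min'_le x a hax)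
              (le_min' _ _ _ fun b hb => S.min'_le b (hxS hb))
            have hval : (fun b => if b = a then d else g' b) (x.min' hx) = d := by
              simp [hmin]
            rw [hval]
            have hxe : x.erase a ⊆ A' := by
              intro b hb
              have hb' := hxA (Finset.erase_subset a x hb)
              rcases Finset.mem_insert.mp hb' with h | h
              · exact absurd h (Finset.ne_of_mem_erase hb)
              · exact h
            have hcard : (x.erase a).card = j := by
              rw [card_erase_of_mem hax, hxcard]; omega
            have := hd (x.erase a) (hxe.trans hA'B) hcard
            simpa [Finset.insert_erase hax] using this
          · have hxsub : x ⊆ A' := fun b hb => by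
              rcases Finset.mem_insert.mp (hxA hb) with h | h
              · exact absurd (h ▸ hb) hax
              · exact h
            have hne : x.min' hx ≠ a := fun h => hax (h ▸ x.min'_mem hx)
            have hval : (fun b => if b = a then d else g' b) (x.min' hx) = g' (x.min' hx) :=
              if_neg hne
            rw [hval]
            exact hg' x hx hxsub hxcard
    obtain ⟨N, hN⟩ := key (c * r)
    refine ⟨N, ?_⟩
    intro α _ S f hS
    obtain ⟨A, g, hAS, hAcard, hg⟩ := hN α S f hS
    have hpigeon : ∃ y ∈ (Finset.univ : Finset (Fin c)), r ≤ (A.filter fun b => g b = y).card := by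
      apply Finset.exists_le_card_fiber_of_mul_le_card_of_maps_to
        (fun b _ => Finset.mem_univ (g b)) ⟨⟨0, hc⟩, Finset.mem_univ _⟩
      simp [hAcard]
    obtain ⟨d, _, hd⟩ := hpigeon
    obtain ⟨T, hTsub, hTcard⟩ := Finset.exists_subset_card_eq (n := r) hd
    refine ⟨T, (hTsub.trans (filter_subset _ _)).trans hAS, hTcard, d, ?_⟩
    intro x hxT hxc
    have hx : x.Nonempty := card_pos.mp (by omega)
    have hmem := hTsub (hxT (x.min'_mem hx))
    rw [hg x hx (hxT.trans (hTsub.trans (filter_subset _ _))) hxc]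
    exact (Finset.mem_filter.mp hmem).2

/-- Finite hypergraph Ramsey theorem for arbitrary types. -/
private lemma ramsey1 (c : ℕ) (hc : 0 < c) (j r : ℕ) :
    ∃ N : ℕ, ∀ (α : Type) (S : Finset α) (f : Finset α → Fin c),
      N ≤ S.card → ∃ T, T ⊆ S ∧ T.card = r ∧
        ∃ d, ∀ x, x ⊆ T → x.card = j → f x = d := by
  classical
  obtain ⟨N, hN⟩ := ramsey_lin c hc j r
  refine ⟨N, ?_⟩
  intro α S f hS
  obtain ⟨S', hS'S, hS'card⟩ := Finset.exists_subset_card_eq (s := S) (n := N) hS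
  let q : Fin N → α := fun k => (S'.equivFin.symm (Fin.cast hS'card.symm k) : α)
  have hqinj : Function.Injective q := by
    intro a b hab
    have := S'.equivFin.symm.injective (Subtype.val_injective hab)
    simpa [Fin.ext_iff] using Fin.ext_iff.mp this
  have hqmem : ∀ k, q k ∈ S' := fun k => (S'.equivFin.symm _).2
  obtain ⟨T', _, hT'card, d, hdT⟩ := hN (Fin N) Finset.univ (fun x => f (x.image q))
    (by simp)
  refine ⟨T'.image q, ?_, ?_, d, ?_⟩
  · intro b hb
    obtain ⟨k, _, rfl⟩ := Finset.mem_image.mp hb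
    exact hS'S (hqmem k)
  · rw [Finset.card_image_of_injective _ hqinj, hT'card]
  · intro x hxT hxc
    obtain ⟨x', hx'T, rfl⟩ := Finset.subset_image_iff.mp hxT
    have : x'.card = j := by rwa [Finset.card_image_of_injective _ hqinj] at hxc
    exact hdT x' hx'T this

/-- Product (polarized) Ramsey theorem, coloring-function form. -/
private lemma prodRamsey : ∀ n : ℕ, ∃ R : (Fin n → ℕ) → ℕ → ℕ → ℕ,
    ∀ (α : Type) (j : Fin n → ℕ) (c r : ℕ), 0 < c →
      ∀ S : Fin n → Finset α, (∀ i, R j c r ≤ (S i).card) →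
        ∀ f : (Fin n → Finset α) → Fin c,
          ∃ T : Fin n → Finset α, (∀ i, T i ⊆ S i ∧ (T i).card = r) ∧
            ∃ d, ∀ x, (∀ i, x i ⊆ T i ∧ (x i).card = j i) → f x = d := by
  classical
  intro n
  induction n with
  | zero =>
    refine ⟨fun _ _ _ => 0, ?_⟩
    intro α j c r hc S _ f
    refine ⟨fun i => i.elim0, fun i => i.elim0, f (fun i => i.elim0), fun x _ => ?_⟩
    congr 1
    funext i
    exact i.elim0
  | succ n ihn =>
    obtain ⟨Rn, hRn⟩ := ihn
    -- choice-based 1-dim Ramsey number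
    let N1 : ℕ → ℕ → ℕ → ℕ := fun j0 c r =>
      if hc : 0 < c then (ramsey1 c hc j0 r).choose else 0
    refine ⟨fun j c r => max (N1 (j 0) c r)
      ((Rn (Fin.tail j) c)^[Nat.choose (N1 (j 0) c r) (j 0)] r), ?_⟩
    intro α j c r hc S hS f
    -- shrink the tail coordinates along a list of heads
    have shrink : ∀ (l : List (Finset α)) (S' : Fin n → Finset α),
        (∀ i, (Rn (Fin.tail j) c)^[l.length] r ≤ (S' i).card) →
        ∃ T : Fin n → Finset α, (∀ i, T i ⊆ S' i ∧ (T i).card = r) ∧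
          ∀ u ∈ l, ∃ d, ∀ w : Fin n → Finset α,
            (∀ i, w i ⊆ T i ∧ (w i).card = Fin.tail j i) → f (Fin.cons u w) = d := by
      intro l
      induction l with
      | nil =>
        intro S' h
        refine ⟨fun i => (Finset.exists_subset_card_eq (s := S' i) (n := r) (by simpa using h i)).choose,
          fun i => ?_, by simp⟩
        obtain ⟨h1, h2⟩ := (Finset.exists_subset_card_eq (s := S' i) (n := r) (by simpa using h i)).choose_spec
        exact ⟨h1, h2⟩
      | cons u l ihl =>
        intro S' h
        have h' : ∀ i, Rn (Fin.tail j) c ((Rn (Fin.tail j) c)^[l.length] r) ≤ (S' i).card := by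
          intro i
          have := h i
          rwa [List.length_cons, Function.iterate_succ_apply'] at this
        obtain ⟨T', hT', d, hd⟩ := hRn α (Fin.tail j) c _ hc S' h' (fun w => f (Fin.cons u w))
        obtain ⟨T, hT, hmono⟩ := ihl T' (fun i => (hT' i).2.ge)
        refine ⟨T, fun i => ⟨(hT i).1.trans (hT' i).1, (hT i).2⟩, ?_⟩
        intro v hv
        rcases List.mem_cons.mp hv with rfl | hv
        · exact ⟨d, fun w hw => hd w (fun i => ⟨(hw i).1.trans (hT i).1, (hw i).2⟩)⟩
        · exact hmono v hv
    have hN1 := (ramsey1 c hc (j 0) r).choose_spec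
    have hN1eq : N1 (j 0) c r = (ramsey1 c hc (j 0) r).choose := dif_pos hc
    -- pick T₀ ⊆ S 0 of size M₀
    have hS0 : N1 (j 0) c r ≤ (S 0).card := le_trans (le_max_left _ _) (hS 0)
    obtain ⟨T₀, hT₀S, hT₀card⟩ := Finset.exists_subset_card_eq (s := S 0) (n := N1 (j 0) c r) hS0
    set l := (T₀.powersetCard (j 0)).toList with hl
    have hllen : l.length = Nat.choose (N1 (j 0) c r) (j 0) := by
      rw [hl, Finset.length_toList, Finset.card_powersetCard, hT₀card]
    obtain ⟨Tt, hTt, hmono⟩ := shrink l (fun i => S i.succ) (by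
      intro i
      rw [hllen]
      exact le_trans (le_max_right _ _) (hS i.succ))
    -- color heads by the monochromatic tail color
    let g : Finset α → Fin c := fun u =>
      if h : ∃ d, ∀ w : Fin n → Finset α,
          (∀ i, w i ⊆ Tt i ∧ (w i).card = Fin.tail j i) → f (Fin.cons u w) = d
      then h.choose else ⟨0, hc⟩
    obtain ⟨T₀', hT₀'sub, hT₀'card, d, hdg⟩ := hN1 α T₀ g (le_of_eq (hN1eq ▸ hT₀card.symm))
    refine ⟨Fin.cons T₀' Tt, ?_, d, ?_⟩
    · intro i
      refine Fin.cases ?_ ?_ i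
      · simpa using ⟨hT₀'sub.trans hT₀S, hT₀'card⟩
      · intro k
        simpa using hTt k
    · intro x hx
      have hu0 := hx 0
      rw [Fin.cons_zero] at hu0
      have hex : ∃ d', ∀ w : Fin n → Finset α,
          (∀ i, w i ⊆ Tt i ∧ (w i).card = Fin.tail j i) → f (Fin.cons (x 0) w) = d' := by
        apply hmono (x 0)
        rw [hl, Finset.mem_toList, Finset.mem_powersetCard]
        exact ⟨hu0.1.trans hT₀'sub, hu0.2⟩
      have hgu : g (x 0) = hex.choose := dif_pos hex
      have hfx : f x = hex.choose := by
        have hw : ∀ i, Fin.tail x i ⊆ Tt i ∧ (Fin.tail x i).card = Fin.tail j i := by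
          intro i
          have := hx i.succ
          rwa [Fin.cons_succ] at this
        have := hex.choose_spec (Fin.tail x) hw
        rwa [Fin.cons_self_tail] at this
      rw [hfx, ← hgu]
      exact hdg (x 0) hu0.1 hu0.2

/-- Multidimensional (polarized) finite Ramsey theorem: for `n ≥ 1` there is
a Ramsey function `R` such that whenever `|Sᵢ| ≥ R(j, c, r)` and
`[S₁]^{j₁} × ⋯ × [Sₙ]^{jₙ}` is covered by `c` pieces `Y₁, …, Y_c`, there are
`Tᵢ ∈ [Sᵢ]^r` with `[T₁]^{j₁} × ⋯ × [Tₙ]^{jₙ}` inside a single piece. -/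
theorem stmt_12 (n : ℕ) (hn : 1 ≤ n) :
    ∃ R : (Fin n → ℕ) → ℕ → ℕ → ℕ,
      ∀ (α : Type) (j : Fin n → ℕ) (c r : ℕ), 0 < c →
        ∀ S : Fin n → Finset α, (∀ i, R j c r ≤ (S i).card) →
          ∀ Y : Fin c → Set (Fin n → Finset α),
            (∀ x : Fin n → Finset α,
              (∀ i, x i ⊆ S i ∧ (x i).card = j i) → ∃ d, x ∈ Y d) →
            ∃ T : Fin n → Finset α,
              (∀ i, T i ⊆ S i ∧ (T i).card = r) ∧
              ∃ d, ∀ x : Fin n → Finset α,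
                (∀ i, x i ⊆ T i ∧ (x i).card = j i) → x ∈ Y d := by
  classical
  obtain ⟨R, hR⟩ := prodRamsey n
  refine ⟨R, ?_⟩
  intro α j c r hc S hS Y hY
  let F : (Fin n → Finset α) → Fin c := fun x =>
    if h : ∃ d, x ∈ Y d then h.choose else ⟨0, hc⟩
  obtain ⟨T, hT, d, hd⟩ := hR α j c r hc S hS F
  refine ⟨T, hT, d, ?_⟩
  intro x hx
  have hgood : ∀ i, x i ⊆ S i ∧ (x i).card = j i :=
    fun i => ⟨(hx i).1.trans (hT i).1, (hx i).2⟩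
  have hex : ∃ d, x ∈ Y d := hY x hgood
  have hFx : F x = hex.choose := dif_pos hex
  have := hex.choose_spec
  rwa [← hFx, hd x hx] at this
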